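/- Let k be a field, a, b ∈ k, and let X, Y, Z ∈ k satisfy Y²Z = X(X² + aXZ + bZ²). Set X' = Y²Z, Y' = (X² − bZ²)Y, Z' = X²Z. Then Y'²Z' = X'((X' − aZ')² − 4bZ'²); that is, the map (X:Y:Z) ↦ (Y²Z : (X²−bZ²)Y : X²Z) sends points of the Weierstrass curve Y²Z = X(X²+aXZ+bZ²) to points of the 2-isogenous curve Y²Z = X((X−aZ)² − 4bZ²). -/
import Mathlib


/-- The map `(X:Y:Z) ↦ (Y²Z : (X²−bZ²)Y : X²Z)` sends points of the
Weierstrass curve `Y²Z = X(X²+aXZ+bZ²)` to points of the 2-isogenous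
curve `Y²Z = X((X−aZ)² − 4bZ²)`. -/
theorem two_isogeny_weierstrass {k : Type*} [Field k] (a b : k)
    (X Y Z : k) (h : Y ^ 2 * Z = X * (X ^ 2 + a * X * Z + b * Z ^ 2)) :
    ((X ^ 2 - b * Z ^ 2) * Y) ^ 2 * (X ^ 2 * Z) =
      (Y ^ 2 * Z) *
        ((Y ^ 2 * Z - a * (X ^ 2 * Z)) ^ 2 - 4 * b * (X ^ 2 * Z) ^ 2) := by
  linear_combination (-(Y^2*Z) * (Y^2*Z + X*(X^2+a*X*Z+b*Z^2) - 2*a*X^2*Z)) * h
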